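/- Let Ω > 0, λ > 0 and let T satisfy 0 < T ≤ π/Ω. If ψ ∈ PW_Ω satisfies ψ(mT) ∈ 2λℤ for every m ∈ ℤ, then the set {m ∈ ℤ : ψ(mT) ≠ 0} is finite. -/

import Mathlib

open MeasureTheory Real

/-- Membership in the Paley–Wiener space `PW_Ω`: `g(t) = ∫_{−Ω}^{Ω} φ(ω) e^{iωt} dω`
for some square-integrable `φ : [−Ω,Ω] → ℂ`. -/
def IsPW (Ω : ℝ) (g : ℝ → ℝ) : Prop :=
  ∃ φ : ℝ → ℂ, MemLp φ 2 (volume.restrict (Set.Icc (-Ω) Ω)) ∧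
    ∀ t : ℝ, (g t : ℂ) =
      ∫ ω in Set.Icc (-Ω) Ω, φ ω * Complex.exp (Complex.I * (ω : ℂ) * (t : ℂ))

theorem stmt10 (Ω lam T : ℝ) (hΩ : 0 < Ω) (hlam : 0 < lam)
    (hT0 : 0 < T) (hT : T ≤ π / Ω)
    (ψ : ℝ → ℝ) (hψ : IsPW Ω ψ)
    (hsamples : ∀ m : ℤ, ∃ k : ℤ, ψ (m * T) = 2 * lam * k) :
    {m : ℤ | ψ (m * T) ≠ 0}.Finite := by
  obtain ⟨φ, hφ, hrep⟩ := hψ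
  -- replace φ by a strongly measurable representative
  set φ₀ : ℝ → ℂ := hφ.1.mk φ with hφ₀def
  have hφ₀sm : StronglyMeasurable φ₀ := hφ.1.stronglyMeasurable_mk
  have hae : φ =ᵐ[volume.restrict (Set.Icc (-Ω) Ω)] φ₀ := hφ.1.ae_eq_mk
  have hφ₀mem : MemLp φ₀ 2 (volume.restrict (Set.Icc (-Ω) Ω)) := hφ.ae_eq hae
  have hrestr : volume.restrict (Set.Ioc (-Ω) Ω) = volume.restrict (Set.Icc (-Ω) Ω) :=
    Measure.restrict_congr_set Ioc_ae_eq_Icc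
  have hφ₀memIoc : MemLp φ₀ 2 (volume.restrict (Set.Ioc (-Ω) Ω)) := by
    rw [hrestr]; exact hφ₀mem
  have hrep' : ∀ t : ℝ, (ψ t : ℂ) =
      ∫ ω in Set.Ioc (-Ω) Ω, φ₀ ω * Complex.exp (Complex.I * (ω : ℂ) * (t : ℂ)) := by
    intro t
    rw [hrep t]
    rw [show (∫ ω in Set.Ioc (-Ω) Ω, φ₀ ω * Complex.exp (Complex.I * (ω : ℂ) * (t : ℂ)))
        = ∫ ω in Set.Icc (-Ω) Ω, φ₀ ω * Complex.exp (Complex.I * (ω : ℂ) * (t : ℂ)) from by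
      rw [← hrestr]]
    refine integral_congr_ae ?_
    filter_upwards [hae] with x hx
    rw [hx]
  have hπ : (0 : ℝ) < π := Real.pi_pos
  set L : ℝ := 2 * π / T with hLdef
  have hL : 0 < L := by positivity
  haveI : Fact (0 < L) := ⟨hL⟩
  set a : ℝ := -(π / T) with hadef
  have hab : a + L = π / T := by rw [hadef, hLdef]; field_simp; ring
  have hΩle : Ω ≤ π / T := by
    rw [le_div_iff₀ hT0]
    have h1 : T * Ω ≤ (π / Ω) * Ω := mul_le_mul_of_nonneg_right hT hΩ.le
    rw [div_mul_cancel₀ _ hΩ.ne'] at h1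
    linarith [h1]
  have hsub : Set.Ioc (-Ω) Ω ⊆ Set.Ioc a (a + L) := by
    rw [hab, hadef]
    exact Set.Ioc_subset_Ioc (neg_le_neg hΩle) hΩle
  set F : ℝ → ℂ := (Set.Ioc (-Ω) Ω).indicator φ₀ with hFdef
  have hFsm : StronglyMeasurable F := hφ₀sm.indicator measurableSet_Ioc
  have hFmem : MemLp F 2 (volume : Measure ℝ) :=
    (memLp_indicator_iff_restrict measurableSet_Ioc).2 hφ₀memIoc
  set G : AddCircle L → ℂ := AddCircle.liftIoc L a F with hGdef
  have hGsm : StronglyMeasurable G := by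
    have hmeas : Measurable (fun z : AddCircle L =>
        ((AddCircle.measurableEquivIoc L a z : Set.Ioc a (a + L)) : ℝ)) :=
      measurable_subtype_coe.comp (AddCircle.measurableEquivIoc L a).measurable
    have : G = fun z => F ((AddCircle.measurableEquivIoc L a z : Set.Ioc a (a + L)) : ℝ) := rfl
    rw [this]
    exact hFsm.comp_measurable hmeas
  have hGmem : MemLp G 2 (volume : Measure (AddCircle L)) := by
    rw [← (AddCircle.measurePreserving_mk L a).map_eq]
    refine (memLp_map_measure_iff hGsm.aestronglyMeasurable
      AddCircle.measurable_mk'.aemeasurable).2 ?_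
    have heq : (fun x : ℝ => G (x : AddCircle L)) =ᵐ[volume.restrict (Set.Ioc a (a + L))] F := by
      filter_upwards [ae_restrict_mem measurableSet_Ioc] with x hx
      exact AddCircle.liftIoc_coe_apply hx
    exact ((hFmem.restrict _).ae_eq heq.symm)
  have hGhaar : MemLp G 2 (AddCircle.haarAddCircle : Measure (AddCircle L)) := by
    have hne : ENNReal.ofReal L ≠ 0 := (ENNReal.ofReal_pos.2 hL).ne'
    have h2 : (AddCircle.haarAddCircle : Measure (AddCircle L)) =
        (ENNReal.ofReal L)⁻¹ • (volume : Measure (AddCircle L)) := by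
      rw [AddCircle.volume_eq_smul_haarAddCircle, smul_smul,
        ENNReal.inv_mul_cancel hne ENNReal.ofReal_ne_top, one_smul]
    rw [h2]
    exact hGmem.smul_measure (ENNReal.inv_ne_top.2 hne)
  set g : Lp ℂ 2 (AddCircle.haarAddCircle : Measure (AddCircle L)) := hGhaar.toLp G with hgdef
  have hcoeff : ∀ n : ℤ, fourierCoeff (⇑g) n = fourierCoeff G n := by
    intro n
    refine integral_congr_ae ?_
    filter_upwards [hGhaar.coeFn_toLp] with x hx
    rw [hx]
  have hsummable : Summable fun n : ℤ => ‖fourierCoeff G n‖ ^ 2 := by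
    have h1 : Memℓp (fun n => fourierBasis.repr g n) 2 := (fourierBasis.repr g).property
    have h2 := h1.summable (by norm_num : (0 : ℝ) < (2 : ENNReal).toReal)
    have h3 : ∀ n : ℤ, ‖fourierBasis.repr g n‖ ^ (2 : ENNReal).toReal
        = ‖fourierCoeff G n‖ ^ 2 := by
      intro n
      rw [fourierBasis_repr, hcoeff n]
      rw [show ((2 : ENNReal).toReal) = ((2 : ℕ) : ℝ) by norm_num,
        Real.rpow_natCast]
    simpa only [h3] using h2
  -- the key identity relating samples of ψ to Fourier coefficients of G
  have hkey : ∀ m : ℤ, (ψ ((m : ℝ) * T) : ℂ) = (L : ℂ) * fourierCoeff G (-m) := by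
    intro m
    rw [fourierCoeff_eq_intervalIntegral G (-m) a, neg_neg]
    have h1 : (∫ x in a..a + L, fourier m (x : AddCircle L) • G x)
        = ∫ x in Set.Ioc (-Ω) Ω,
            φ₀ x * Complex.exp (Complex.I * (x : ℂ) * (((m : ℝ) * T : ℝ) : ℂ)) := by
      rw [intervalIntegral.integral_of_le (by linarith : a ≤ a + L)]
      have h2 : ∀ x ∈ Set.Ioc a (a + L), fourier m (x : AddCircle L) • G (x : AddCircle L)
          = (Set.Ioc (-Ω) Ω).indicator
              (fun ω => φ₀ ω * Complex.exp (Complex.I * (ω : ℂ) * (((m : ℝ) * T : ℝ) : ℂ))) x := by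
        intro x hx
        rw [show G (x : AddCircle L) = F x from AddCircle.liftIoc_coe_apply hx]
        rw [smul_eq_mul]
        by_cases hx' : x ∈ Set.Ioc (-Ω) Ω
        · rw [Set.indicator_of_mem hx' , hFdef, Set.indicator_of_mem hx']
          rw [fourier_coe_apply]
          have hexp : 2 * (π : ℂ) * Complex.I * (m : ℂ) * (x : ℂ) / (L : ℂ)
              = Complex.I * (x : ℂ) * (((m : ℝ) * T : ℝ) : ℂ) := by
            have hLc : (L : ℂ) = 2 * (π : ℂ) / (T : ℂ) := by
              rw [hLdef]; push_cast; ring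
            have hTne : (T : ℂ) ≠ 0 := by exact_mod_cast hT0.ne'
            have hπne : (π : ℂ) ≠ 0 := by exact_mod_cast hπ.ne'
            rw [hLc]
            push_cast
            field_simp
          rw [hexp]
          ring
        · rw [Set.indicator_of_notMem hx', hFdef, Set.indicator_of_notMem hx', mul_zero]
      rw [setIntegral_congr_fun measurableSet_Ioc h2]
      rw [setIntegral_indicator measurableSet_Ioc,
        Set.inter_eq_self_of_subset_right hsub]
    rw [h1, ← hrep' ((m : ℝ) * T)]
    have hLne : (L : ℂ) ≠ 0 := by exact_mod_cast hL.ne'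
    rw [Complex.real_smul]
    push_cast
    field_simp
  -- summability over m of the squared norms of ψ(mT)
  have hsum2 : Summable fun m : ℤ => ‖fourierCoeff G (-m)‖ ^ 2 :=
    hsummable.comp_injective neg_injective
  have htend := hsum2.tendsto_cofinite_zero
  have hε : (0 : ℝ) < (2 * lam / L) ^ 2 := by positivity
  have hev : ∀ᶠ m in Filter.cofinite, ‖fourierCoeff G (-m)‖ ^ 2 < (2 * lam / L) ^ 2 :=
    htend.eventually (gt_mem_nhds hε)
  rw [Filter.eventually_cofinite] at hev
  refine hev.subset ?_
  intro m hm
  simp only [Set.mem_setOf_eq] at hm ⊢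
  intro hlt
  obtain ⟨k, hk⟩ := hsamples m
  have hkne : k ≠ 0 := by
    intro h0
    exact hm (by rw [hk, h0]; simp)
  have habs : 2 * lam ≤ |ψ ((m : ℝ) * T)| := by
    rw [hk, abs_mul, abs_mul]
    have h1 : (1 : ℝ) ≤ |(k : ℝ)| := by
      rw [← Int.cast_abs]
      exact_mod_cast Int.one_le_abs hkne
    have h2 : |(2 : ℝ)| = 2 := by norm_num
    rw [h2, abs_of_pos hlam]
    nlinarith
  have hnorm : ‖fourierCoeff G (-m)‖ = |ψ ((m : ℝ) * T)| / L := by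
    have := hkey m
    have h3 : ‖(ψ ((m : ℝ) * T) : ℂ)‖ = L * ‖fourierCoeff G (-m)‖ := by
      rw [this, norm_mul, Complex.norm_real, Real.norm_eq_abs, abs_of_pos hL]
    rw [Complex.norm_real, Real.norm_eq_abs] at h3
    field_simp [hL.ne'] at h3 ⊢
    linarith [h3]
  have h4 : 2 * lam / L ≤ ‖fourierCoeff G (-m)‖ := by
    rw [hnorm]
    gcongr
  have h5 : (2 * lam / L) ^ 2 ≤ ‖fourierCoeff G (-m)‖ ^ 2 := by
    have h6 : (0 : ℝ) ≤ 2 * lam / L := by positivity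
    nlinarith
  linarith
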